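/- For a PDFA A in which every state is reachable, the map sending the ≡^{M_A}_E-class of a string u to the ≡^A_E-class of the state τ*(u) is a well-defined bijection; moreover it commutes with the symbol-append operations, maps the class of the empty string to the class of the initial state, and carries the induced class-valued output maps onto each other (i.e., it is an isomorphism of quotient structures). -/
import Mathlib


/-- A probability distribution over `Option α` (the alphabet `α` extended with
the terminal symbol `$`, modeled as `none`). -/
def PDist (α : Type*) [Fintype α] : Type _ :=
  {f : Option α → ℝ // (∀ x, 0 ≤ f x) ∧ ∑ x, f x = 1}

/-- A probabilistic deterministic finite automaton with state space `Q`. -/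
structure PDFA (Q : Type*) (α : Type*) [Fintype α] where
  init : Q
  out : Q → PDist α
  next : Q → α → Q

variable {Q α : Type*} [Fintype α]

/-- Extension of the transition function to strings. -/
def PDFA.run (A : PDFA Q α) (q : Q) (u : List α) : Q := u.foldl A.next q

/-- The language model defined by a PDFA. -/
def PDFA.lm (A : PDFA Q α) (u : List α) : PDist α := A.out (A.run A.init u)

/-- The tolerance/congruence induced on strings by a language model `M` and a
relation `S` on distributions. -/
def strTol (M : List α → PDist α) (S : PDist α → PDist α → Prop) (u u' : List α) : Prop :=
  ∀ w : List α, S (M (u ++ w)) (M (u' ++ w))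

/-- The tolerance/congruence induced on states of a PDFA. -/
def stateTol (A : PDFA Q α) (S : PDist α → PDist α → Prop) (q q' : Q) : Prop :=
  ∀ w : List α, S (A.out (A.run q w)) (A.out (A.run q' w))

/-- Prop. 12 (paper): for a PDFA with all states reachable, the map sending the
`≡^{M_A}_E`-class of a string `u` to the `≡^A_E`-class of `τ*(u)` is a
well-defined bijection which commutes with appending symbols, maps the class of
the empty string to the class of the initial state, and carries the induced
class-valued output maps onto each other. -/
theorem quotient_isomorphism {Q α : Type*} [Fintype α] [Fintype Q] (A : PDFA Q α)
    (E : PDist α → PDist α → Prop) (hE : Equivalence E)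
    (hreach : ∀ q : Q, ∃ u : List α, A.run A.init u = q) :
    ∃ β : Quot (strTol A.lm E) → Quot (stateTol A E),
      Function.Bijective β ∧
      (∀ u, β (Quot.mk _ u) = Quot.mk _ (A.run A.init u)) ∧
      (∀ u (a : α), β (Quot.mk _ (u ++ [a])) = Quot.mk _ (A.next (A.run A.init u) a)) ∧
      β (Quot.mk _ []) = Quot.mk _ A.init ∧
      ∃ (πs : Quot (strTol A.lm E) → Quot E) (πq : Quot (stateTol A E) → Quot E),
        (∀ u, πs (Quot.mk _ u) = Quot.mk _ (A.lm u)) ∧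
        (∀ q, πq (Quot.mk _ q) = Quot.mk _ (A.out q)) ∧
        (∀ x, πq (β x) = πs x) := by
  have hrun : ∀ (q : Q) (u w : List α), A.run q (u ++ w) = A.run (A.run q u) w := by
    intro q u w; simp [PDFA.run, List.foldl_append]
  have key : ∀ u u' : List α,
      strTol A.lm E u u' ↔ stateTol A E (A.run A.init u) (A.run A.init u') := by
    intro u u'
    constructor
    · intro h w; have := h w; simpa [PDFA.lm, hrun] using this
    · intro h w; have := h w; simpa [PDFA.lm, hrun] using this
  refine ⟨Quot.lift (fun u => Quot.mk _ (A.run A.init u))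
    (fun u u' h => Quot.sound ((key u u').1 h)), ?_, fun u => rfl, ?_, rfl, ?_⟩
  · constructor
    · intro x y h
      induction x using Quot.ind with | _ u => ?_
      induction y using Quot.ind with | _ u' => ?_
      have hEq : Equivalence (stateTol A E) :=
        ⟨fun q w => hE.refl _, fun h w => hE.symm (h w), fun h h' w => hE.trans (h w) (h' w)⟩
      have : stateTol A E (A.run A.init u) (A.run A.init u') :=
        (Equivalence.eqvGen_iff hEq).mp (Quot.eqvGen_exact h)
      exact Quot.sound ((key u u').2 this)
    · intro y
      induction y using Quot.ind with | _ q => ?_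
      obtain ⟨u, hu⟩ := hreach q
      exact ⟨Quot.mk _ u, by simp [hu]⟩
  · intro u a
    have : A.run A.init (u ++ [a]) = A.next (A.run A.init u) a := by
      simp [hrun, PDFA.run]
    simp [this]
  · refine ⟨Quot.lift (fun u => Quot.mk E (A.lm u)) ?_,
      Quot.lift (fun q => Quot.mk E (A.out q)) ?_, fun u => rfl, fun q => rfl, ?_⟩
    · intro u u' h
      exact Quot.sound (by simpa using h [])
    · intro q q' h
      exact Quot.sound (by simpa [PDFA.run] using h [])
    · intro x
      induction x using Quot.ind with | _ u => ?_
      simp [PDFA.lm]
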